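/- Let K ⊂ ℝ² be a nondegenerate triangle with vertices a₁, a₂, a₃, area |K|, and edge vectors ℓ₁ = a₃ − a₂, ℓ₂ = a₁ − a₃, ℓ₃ = a₂ − a₁. Let u : ℝ² → ℝ be a quadratic polynomial with constant Hessian H, u_I its linear interpolant at the vertices, d_i = ℓ_i · (H ℓ_i), and d = (d₁, d₂, d₃)ᵀ. Let B be the symmetric 3×3 matrix with diagonal entries B_{ii} = (|ℓ₁|² + |ℓ₂|² + |ℓ₃|²)/(48|K|) and off-diagonal entries B_{ij} = (2 ℓ_i · ℓ_j)/(48|K|) for i ≠ j. Then ∫_K |∇(u − u_I)(x)|² dx = (1/4) d · (B d). -/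

import Mathlib

open MeasureTheory RealInnerProductSpace Matrix

/-- The bilinear form `v ⬝ (H w)` induced by a `2 × 2` real matrix `H` on `ℝ²`. -/
noncomputable def matBilin (H : Matrix (Fin 2) (Fin 2) ℝ)
    (v w : EuclideanSpace ℝ (Fin 2)) : ℝ :=
  ∑ i : Fin 2, ∑ j : Fin 2, v i * H i j * w j

open MeasureTheory RealInnerProductSpace Matrix

noncomputable abbrev E2 : Type := EuclideanSpace ℝ (Fin 2)



lemma integral_cubic01 (c0 c1 c2 c3 : ℝ) :
    ∫ x in (0:ℝ)..1, (c0 + c1*x + c2*x^2 + c3*x^3) = c0 + c1/2 + c2/3 + c3/4 := by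
  have h : ∀ x : ℝ, HasDerivAt (fun t : ℝ => c0*t + c1/2*t^2 + c2/3*t^3 + c3/4*t^4)
      (c0 + c1*x + c2*x^2 + c3*x^3) x := by
    intro x
    have := (((hasDerivAt_id x).const_mul c0).add ((hasDerivAt_pow 2 x).const_mul (c1/2))).add
      (((hasDerivAt_pow 3 x).const_mul (c2/3)).add ((hasDerivAt_pow 4 x).const_mul (c3/4)))
    convert this using 1
    · rfl
    · rfl
    · funext t; simp only [id_eq, Pi.add_apply]; ring
    · norm_num; ring
  rw [intervalIntegral.integral_eq_sub_of_hasDerivAt (fun x _ => h x)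
    ((Continuous.intervalIntegrable (by fun_prop) 0 1))]
  norm_num

lemma integral_quad0a (a c0 c1 c2 : ℝ) :
    ∫ y in (0:ℝ)..a, (c0 + c1*y + c2*y^2) = c0*a + c1/2*a^2 + c2/3*a^3 := by
  have h : ∀ x : ℝ, HasDerivAt (fun t : ℝ => c0*t + c1/2*t^2 + c2/3*t^3)
      (c0 + c1*x + c2*x^2) x := by
    intro x
    have := ((hasDerivAt_id x).const_mul c0).add (((hasDerivAt_pow 2 x).const_mul (c1/2)).add
      ((hasDerivAt_pow 3 x).const_mul (c2/3)))
    convert this using 1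
    · rfl
    · rfl
    · funext t; simp only [id_eq, Pi.add_apply]; ring
    · norm_num; ring
  rw [intervalIntegral.integral_eq_sub_of_hasDerivAt (fun x _ => h x)
    ((Continuous.intervalIntegrable (by fun_prop) 0 a))]
  ring


def S2 : Set (ℝ × ℝ) := {q | 0 ≤ q.1 ∧ 0 ≤ q.2 ∧ q.1 + q.2 ≤ 1}

lemma S2_closed : IsClosed S2 := by
  have : S2 = ((fun q : ℝ × ℝ => q.1) ⁻¹' Set.Ici 0) ∩
      (((fun q : ℝ × ℝ => q.2) ⁻¹' Set.Ici 0) ∩ ((fun q : ℝ × ℝ => q.1 + q.2) ⁻¹' Set.Iic 1)) := by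
    ext q; simp [S2, Set.mem_setOf_eq]
  rw [this]
  exact (isClosed_Ici.preimage continuous_fst).inter
    ((isClosed_Ici.preimage continuous_snd).inter
      (isClosed_Iic.preimage (continuous_fst.add continuous_snd)))

lemma S2_meas : MeasurableSet S2 := S2_closed.measurableSet

lemma S2_compact : IsCompact S2 := by
  refine IsCompact.of_isClosed_subset (isCompact_Icc (a := ((0:ℝ),(0:ℝ))) (b := (1,1))) S2_closed ?_
  rintro ⟨x, y⟩ ⟨h1, h2, h3⟩
  simp only [Set.mem_Icc, Prod.mk_le_mk]
  exact ⟨⟨h1, h2⟩, ⟨by linarith, by linarith⟩⟩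

lemma integral_S2 (α β γ δ ε ζ : ℝ) :
    ∫ q in S2, (α + β*q.1 + γ*q.2 + δ*q.1^2 + ε*q.2^2 + ζ*q.1*q.2) =
      α/2 + β/6 + γ/6 + δ/12 + ε/12 + ζ/24 := by
  set f : ℝ × ℝ → ℝ := fun q => α + β*q.1 + γ*q.2 + δ*q.1^2 + ε*q.2^2 + ζ*q.1*q.2 with hf
  have hcont : Continuous f := by fun_prop
  have hint : IntegrableOn f S2 := hcont.continuousOn.integrableOn_compact S2_compact
  have hind : Integrable (S2.indicator f) := (integrable_indicator_iff S2_meas).2 hint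
  rw [← integral_indicator S2_meas]
  rw [Measure.volume_eq_prod] at hind ⊢
  rw [integral_prod _ hind]
  have hslice : ∀ x : ℝ, (∫ y : ℝ, S2.indicator f (x, y)) =
      (Set.Icc (0:ℝ) 1).indicator (fun x => ∫ y in (0:ℝ)..(1-x), f (x, y)) x := by
    intro x
    by_cases hx : x ∈ Set.Icc (0:ℝ) 1
    · rw [Set.indicator_of_mem hx]
      obtain ⟨hx0, hx1⟩ := hx
      have : (fun y => S2.indicator f (x, y)) = (Set.Icc (0:ℝ) (1-x)).indicator (fun y => f (x, y)) := by
        funext y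
        by_cases hy : y ∈ Set.Icc (0:ℝ) (1-x)
        · rw [Set.indicator_of_mem hy, Set.indicator_of_mem]
          exact ⟨hx0, hy.1, by have := hy.2; linarith⟩
        · rw [Set.indicator_of_notMem hy, Set.indicator_of_notMem]
          intro hmem
          exact hy ⟨hmem.2.1, by have := hmem.2.2; linarith⟩
      rw [this, integral_indicator measurableSet_Icc,
        integral_Icc_eq_integral_Ioc, ← intervalIntegral.integral_of_le (by linarith)]
    · rw [Set.indicator_of_notMem hx]
      have : (fun y => S2.indicator f (x, y)) = fun _ => (0:ℝ) := by
        funext y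
        rw [Set.indicator_of_notMem]
        intro hmem
        rcases hmem with ⟨h1, h2, h3⟩
        exact hx ⟨h1, by linarith⟩
      rw [this, integral_zero]
  simp only [hslice]
  rw [integral_indicator measurableSet_Icc, integral_Icc_eq_integral_Ioc,
    ← intervalIntegral.integral_of_le (by norm_num : (0:ℝ) ≤ 1)]
  have step1 : ∀ x : ℝ, (∫ y in (0:ℝ)..(1-x), f (x, y)) =
      (α + γ/2 + ε/3) + (β - α + ζ/2 - γ - ε)*x + (δ - β + γ/2 - ζ + ε)*x^2
        + (-δ + ζ/2 - ε/3)*x^3 := by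
    intro x
    have h1 : (∫ y in (0:ℝ)..(1-x), f (x, y)) =
        ∫ y in (0:ℝ)..(1-x), ((α + β*x + δ*x^2) + (γ + ζ*x)*y + ε*y^2) := by
      apply intervalIntegral.integral_congr
      intro y _
      simp only [hf]; ring
    rw [h1, integral_quad0a]
    ring
  have h2 : (∫ x in (0:ℝ)..1, ∫ y in (0:ℝ)..(1-x), f (x, y)) =
      ∫ x in (0:ℝ)..1, ((α + γ/2 + ε/3) + (β - α + ζ/2 - γ - ε)*x + (δ - β + γ/2 - ζ + ε)*x^2
        + (-δ + ζ/2 - ε/3)*x^3) := by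
    apply intervalIntegral.integral_congr
    intro x _
    exact step1 x
  rw [h2, integral_cubic01]
  ring



lemma hasGradientAt_quad (Mc : E2 →L[ℝ] E2) (hsym : ∀ x y : E2, ⟪Mc x, y⟫ = ⟪x, Mc y⟫)
    (v : E2) (c' : ℝ) (x : E2) :
    HasGradientAt (fun y : E2 => (1/2) * ⟪y, Mc y⟫ + ⟪v, y⟫ + c') (Mc x + v) x := by
  rw [hasGradientAt_iff_hasFDerivAt]
  have h1 : HasFDerivAt (fun y : E2 => ⟪y, Mc y⟫)
      ((fderivInnerCLM ℝ (x, Mc x)).comp ((ContinuousLinearMap.id ℝ E2).prod Mc)) x :=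
    (hasFDerivAt_id x).inner ℝ Mc.hasFDerivAt
  have h2 : HasFDerivAt (fun y : E2 => ⟪v, y⟫) (innerSL ℝ v) x := (innerSL ℝ v).hasFDerivAt
  have h3 := ((h1.const_mul (1/2)).add h2).add_const c'
  convert h3 using 1
  · rfl
  · rfl
  · rfl
  ext t
  simp only [InnerProductSpace.toDual_apply_apply, ContinuousLinearMap.add_apply,
    ContinuousLinearMap.coe_smul', Pi.smul_apply, ContinuousLinearMap.coe_comp',
    Function.comp_apply, ContinuousLinearMap.prod_apply, ContinuousLinearMap.coe_id', id_eq,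
    fderivInnerCLM_apply, innerSL_apply_apply, smul_eq_mul]
  rw [inner_add_left, ← hsym x t, real_inner_comm t (Mc x)]
  ring



noncomputable def mkL (v w : E2) : E2 →L[ℝ] E2 :=
  ((EuclideanSpace.proj (0 : Fin 2) : E2 →L[ℝ] ℝ).smulRight v) +
    ((EuclideanSpace.proj (1 : Fin 2) : E2 →L[ℝ] ℝ).smulRight w)

lemma mkL_apply (v w p : E2) : mkL v w p = p 0 • v + p 1 • w := by
  simp [mkL]

lemma inner2 (x y : E2) : ⟪x, y⟫ = x 0 * y 0 + x 1 * y 1 := by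
  simp [PiLp.inner_apply, RCLike.inner_apply, Fin.sum_univ_two]; ring

lemma norm2 (x : E2) : ‖x‖ ^ 2 = x 0 ^ 2 + x 1 ^ 2 := by
  rw [← real_inner_self_eq_norm_sq, inner2]; ring

lemma mkL_det (v w : E2) :
    LinearMap.det ((mkL v w : E2 →L[ℝ] E2) : E2 →ₗ[ℝ] E2) = v 0 * w 1 - w 0 * v 1 := by
  have b := (EuclideanSpace.basisFun (Fin 2) ℝ).toBasis
  rw [← LinearMap.det_toMatrix (EuclideanSpace.basisFun (Fin 2) ℝ).toBasis]
  have : (LinearMap.toMatrix (EuclideanSpace.basisFun (Fin 2) ℝ).toBasis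
      (EuclideanSpace.basisFun (Fin 2) ℝ).toBasis ((mkL v w : E2 →L[ℝ] E2) : E2 →ₗ[ℝ] E2)) =
      !![v 0, w 0; v 1, w 1] := by
    ext i j
    fin_cases i <;> fin_cases j <;>
      simp [LinearMap.toMatrix_apply, mkL, EuclideanSpace.single_apply]
  rw [this, Matrix.det_fin_two]
  simp

def Ssim : Set E2 := {p | 0 ≤ p 0 ∧ 0 ≤ p 1 ∧ p 0 + p 1 ≤ 1}

lemma hull_eq_Ssim :
    convexHull ℝ (Set.range (![0, EuclideanSpace.single 0 1, EuclideanSpace.single 1 1] :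
      Fin 3 → E2)) = Ssim := by
  apply le_antisymm
  · apply convexHull_min
    · rintro - ⟨i, rfl⟩
      fin_cases i <;>
        simp [Ssim, EuclideanSpace.single_apply]
    · intro x hx y hy s t hs ht hst
      obtain ⟨hx0, hx1, hx2⟩ := hx
      obtain ⟨hy0, hy1, hy2⟩ := hy
      refine ⟨?_, ?_, ?_⟩ <;>
        simp only [PiLp.add_apply, PiLp.smul_apply, smul_eq_mul] <;> nlinarith
  · intro p hp
    obtain ⟨h0, h1, h01⟩ := hp
    have hmem := Finset.centerMass_mem_convexHull (t := (Finset.univ : Finset (Fin 3)))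
      (w := ![1 - p 0 - p 1, p 0, p 1])
      (z := (![0, EuclideanSpace.single 0 1, EuclideanSpace.single 1 1] : Fin 3 → E2))
      (by intro i _; fin_cases i <;> simp <;> linarith)
      (by simp [Fin.sum_univ_three]; linarith)
      (by intro i _; exact Set.mem_range_self i)
    have heq : (Finset.univ : Finset (Fin 3)).centerMass ![1 - p 0 - p 1, p 0, p 1]
        (![0, EuclideanSpace.single 0 1, EuclideanSpace.single 1 1] : Fin 3 → E2) = p := by
      rw [Finset.centerMass_eq_of_sum_1]
      · ext j
        fin_cases j <;>
          simp [Fin.sum_univ_three, EuclideanSpace.single_apply]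
      · simp [Fin.sum_univ_three]; ring
    rwa [heq] at hmem




noncomputable def ψ2 : E2 ≃ᵐ ℝ × ℝ :=
  (MeasurableEquiv.toLp 2 (Fin 2 → ℝ)).symm.trans (MeasurableEquiv.finTwoArrow)

lemma ψ2_mp : MeasurePreserving ψ2 := by
  have := (volume_preserving_finTwoArrow ℝ).comp
    (EuclideanSpace.volume_preserving_symm_measurableEquiv_toLp (Fin 2))
  exact this

lemma ψ2_apply (p : E2) : ψ2 p = (p 0, p 1) := rfl

lemma Ssim_preim : Ssim = ψ2 ⁻¹' S2 := by
  ext p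
  simp [Ssim, S2, ψ2_apply, Set.mem_setOf_eq]

lemma Ssim_meas : MeasurableSet Ssim := by
  rw [Ssim_preim]
  exact S2_meas.preimage ψ2.measurable

lemma transfer2 (F : ℝ × ℝ → ℝ) : ∫ p in Ssim, F (ψ2 p) = ∫ q in S2, F q := by
  rw [Ssim_preim]
  exact ψ2_mp.setIntegral_preimage_emb ψ2.measurableEmbedding F S2


set_option maxHeartbeats 3000000 in
/-- Bank–Smith formula: for a quadratic `u` with constant Hessian `H` and its linear
interpolant `u_I` on a nondegenerate triangle `K`, with `dᵢ = ℓᵢ · (H ℓᵢ)` and the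
`3 × 3` matrix `B` with diagonal entries `(|ℓ₁|²+|ℓ₂|²+|ℓ₃|²)/(48|K|)` and
off-diagonal entries `2 ℓᵢ·ℓⱼ/(48|K|)`, one has
`∫_K |∇(u − u_I)|² = (1/4) d · (B d)`. -/
theorem integral_gradient_sq_interp_error_bank_smith
    (a : Fin 3 → EuclideanSpace ℝ (Fin 2))
    (hind : AffineIndependent ℝ a)
    (K : Set (EuclideanSpace ℝ (Fin 2)))
    (hK : K = convexHull ℝ (Set.range a))
    (H : Matrix (Fin 2) (Fin 2) ℝ) (hH : H.IsSymm)
    (b : EuclideanSpace ℝ (Fin 2)) (c : ℝ)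
    (u : EuclideanSpace ℝ (Fin 2) → ℝ)
    (hu : ∀ x, u x = (1 / 2) * matBilin H x x + ⟪b, x⟫ + c)
    (uI : EuclideanSpace ℝ (Fin 2) →ᵃ[ℝ] ℝ)
    (hI : ∀ i, uI (a i) = u (a i))
    (ℓ : Fin 3 → EuclideanSpace ℝ (Fin 2))
    (hℓ : ∀ i, ℓ i = a (i + 2) - a (i + 1))
    (d : Fin 3 → ℝ)
    (hd : ∀ i, d i = matBilin H (ℓ i) (ℓ i))
    (B : Matrix (Fin 3) (Fin 3) ℝ)
    (hBdiag : ∀ i, B i i =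
      (‖ℓ 0‖ ^ 2 + ‖ℓ 1‖ ^ 2 + ‖ℓ 2‖ ^ 2) / (48 * (volume K).toReal))
    (hBoff : ∀ i j, i ≠ j → B i j = (2 * ⟪ℓ i, ℓ j⟫) / (48 * (volume K).toReal)) :
    ∫ x in K, ‖gradient (fun y => u y - uI y) x‖ ^ 2 =
      (1 / 4) * (d ⬝ᵥ B.mulVec d) := by
  -- coordinate form of the bilinear form
  have hmB : ∀ x y : E2, matBilin H x y =
      x 0 * H 0 0 * y 0 + x 0 * H 0 1 * y 1 + x 1 * H 1 0 * y 0 + x 1 * H 1 1 * y 1 := by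
    intro x y; simp [matBilin, Fin.sum_univ_two]; ring
  have hsymH : H 1 0 = H 0 1 := by
    have := congrFun (congrFun hH 0) 1
    simpa [Matrix.transpose_apply] using this
  -- the continuous linear map associated with H
  set hc0 : E2 := (WithLp.equiv 2 (Fin 2 → ℝ)).symm ![H 0 0, H 1 0] with hhc0
  set hc1 : E2 := (WithLp.equiv 2 (Fin 2 → ℝ)).symm ![H 0 1, H 1 1] with hhc1
  set Mc : E2 →L[ℝ] E2 := mkL hc0 hc1 with hMcdef
  have hMc0 : ∀ x : E2, Mc x 0 = x 0 * H 0 0 + x 1 * H 0 1 := by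
    intro x
    simp [hMcdef, mkL_apply, hhc0, hhc1]
  have hMc1 : ∀ x : E2, Mc x 1 = x 0 * H 1 0 + x 1 * H 1 1 := by
    intro x
    simp [hMcdef, mkL_apply, hhc0, hhc1]
  have hMcB : ∀ x y : E2, matBilin H x y = ⟪x, Mc y⟫ := by
    intro x y; rw [inner2, hmB, hMc0, hMc1]; ring
  have hsym : ∀ x y : E2, ⟪Mc x, y⟫ = ⟪x, Mc y⟫ := by
    intro x y
    rw [inner2, inner2, hMc0, hMc1, hMc0, hMc1]
    linear_combination (x 0 * y 1 - x 1 * y 0) * hsymH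
  -- affine interpolant decomposition
  set w0 : E2 := (InnerProductSpace.toDual ℝ E2).symm (LinearMap.toContinuousLinearMap uI.linear)
    with hw0def
  have hw0 : ∀ y : E2, ⟪w0, y⟫ = uI.linear y := by
    intro y
    rw [hw0def]
    simp [InnerProductSpace.toDual_symm_apply]
  have huI : ∀ x : E2, uI x = ⟪w0, x⟫ + uI 0 := by
    intro x
    rw [hw0]
    have h := uI.map_vadd (0 : E2) x
    simpa using h
  set vv : E2 := b - w0 with hvvdef
  have he : (fun y => u y - uI y) = fun y : E2 => (1/2) * ⟪y, Mc y⟫ + ⟪vv, y⟫ + (c - uI 0) := by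
    funext y
    rw [hu y, huI y, hMcB, hvvdef, inner_sub_left]
    ring
  have hgrad : ∀ x : E2, gradient (fun y => u y - uI y) x = Mc x + vv := by
    intro x; rw [he]; exact (hasGradientAt_quad Mc hsym vv (c - uI 0) x).gradient
  -- geometry of the triangle
  set v1 : E2 := a 1 - a 0 with hv1def
  set v2 : E2 := a 2 - a 0 with hv2def
  set Lc : E2 →L[ℝ] E2 := mkL v1 v2 with hLcdef
  set D : ℝ := v1 0 * v2 1 - v2 0 * v1 1 with hDdef
  have hli : ∀ r s : ℝ, r • v1 + s • v2 = 0 → r = 0 ∧ s = 0 := by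
    intro r s hrs
    have hsum0 : ∑ e : Fin 3, (![-(r+s), r, s]) e = 0 := by
      simp [Fin.sum_univ_three]
    have hvsum : ∑ e : Fin 3, (![-(r+s), r, s]) e • a e = 0 := by
      rw [hv1def, hv2def] at hrs
      simp only [Fin.sum_univ_three, Matrix.cons_val_zero, Matrix.cons_val_one, Matrix.head_cons,
        Matrix.cons_val_two, Matrix.tail_cons]
      linear_combination (norm := module) hrs
    have h := affineIndependent_iff.1 hind Finset.univ ![-(r+s), r, s] hsum0 hvsum
    exact ⟨h 1 (Finset.mem_univ 1), h 2 (Finset.mem_univ 2)⟩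
  have hD : D ≠ 0 := by
    intro hD0
    rw [hDdef] at hD0
    have k1 := hli (v2 1) (-(v1 1)) (by
      ext j; fin_cases j <;>
        simp only [Fin.zero_eta, Fin.mk_one, PiLp.add_apply, PiLp.smul_apply, PiLp.zero_apply,
          smul_eq_mul] <;> linarith [hD0])
    have k2 := hli (v2 0) (-(v1 0)) (by
      ext j; fin_cases j <;>
        simp only [Fin.zero_eta, Fin.mk_one, PiLp.add_apply, PiLp.smul_apply, PiLp.zero_apply,
          smul_eq_mul] <;> linarith [hD0])
    have hv1z : v1 = 0 := by
      ext j; fin_cases j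
      · simpa using neg_eq_zero.1 k2.2
      · simpa using neg_eq_zero.1 k1.2
    have := (hli 1 0 (by rw [hv1z]; simp)).1
    norm_num at this
  set φ : E2 → E2 := fun p => a 0 + Lc p with hφdef
  have hdet : (Lc : E2 →ₗ[ℝ] E2).det = D := by rw [hLcdef, hDdef]; exact mkL_det v1 v2
  have hφinj : Set.InjOn φ Ssim := by
    intro p _ p' _ hpp
    have h0 : Lc (p - p') = 0 := by
      rw [map_sub, sub_eq_zero]
      exact add_left_cancel hpp
    rw [hLcdef, mkL_apply] at h0
    obtain ⟨h1, h2⟩ := hli _ _ h0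
    have hsub : p - p' = 0 := by
      ext j; fin_cases j
      · simpa using h1
      · simpa using h2
    exact sub_eq_zero.1 hsub
  have hKimg : K = φ '' Ssim := by
    set qv : Fin 3 → E2 := ![0, EuclideanSpace.single 0 1, EuclideanSpace.single 1 1] with hqv
    have hcomp : φ ∘ qv = a := by
      funext i
      fin_cases i
      · show φ (qv 0) = a 0
        rw [hqv]
        simp [hφdef]
      · show φ (qv 1) = a 1
        rw [hqv]
        simp only [Matrix.cons_val_one, Matrix.head_cons]
        rw [hφdef]
        simp only [hLcdef, mkL_apply, EuclideanSpace.single_apply]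
        norm_num
        rw [hv1def]
        abel
      · show φ (qv 2) = a 2
        rw [hqv]
        simp only [Matrix.cons_val_two, Matrix.tail_cons, Matrix.head_cons]
        rw [hφdef]
        simp only [hLcdef, mkL_apply, EuclideanSpace.single_apply]
        norm_num
        rw [hv2def]
        abel
    set φA : E2 →ᵃ[ℝ] E2 := AffineMap.mk' φ (Lc : E2 →ₗ[ℝ] E2) 0
      (by intro p'; simp [hφdef]; abel) with hφA
    have hcoe : ⇑φA = φ := AffineMap.coe_mk' _ _ _ _
    calc K = convexHull ℝ (Set.range a) := hK
      _ = convexHull ℝ (φ '' Set.range qv) := by rw [← hcomp, Set.range_comp]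
      _ = φ '' (convexHull ℝ (Set.range qv)) := by rw [← hcoe, AffineMap.image_convexHull]
      _ = φ '' Ssim := by rw [hqv, hull_eq_Ssim]
  have hfd : ∀ p ∈ Ssim, HasFDerivWithinAt φ Lc Ssim p := by
    intro p _
    exact ((Lc.hasFDerivAt).const_add (a 0)).hasFDerivWithinAt
  have hchg : ∀ F : E2 → ℝ, ∫ x in K, F x = |D| • ∫ p in Ssim, F (φ p) := by
    intro F
    rw [hKimg, integral_image_eq_integral_abs_det_fderiv_smul volume Ssim_meas hfd hφinj]
    simp_rw [hdet]
    rw [integral_smul]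
  -- volume of K
  have hvolS : ∫ p in Ssim, (1:ℝ) = 1/2 := by
    rw [transfer2 (fun _ => (1:ℝ))]
    have h2 : ∫ q in S2, (1:ℝ) =
        ∫ q in S2, (1 + 0*q.1 + 0*q.2 + 0*q.1^2 + 0*q.2^2 + 0*q.1*q.2) := by norm_num
    rw [h2, integral_S2]
    norm_num
  have hvolK : (volume K).toReal = |D| / 2 := by
    have h1 := hchg (fun _ => (1:ℝ))
    rw [setIntegral_const, hvolS] at h1
    simpa [Measure.real, div_eq_mul_inv] using h1
  -- the constant gradient data
  set g0 : E2 := Mc (a 0) + vv with hg0def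
  set cA : ℝ := ‖g0‖^2 with hcA
  set cB1 : ℝ := 2*⟪g0, Mc v1⟫ with hcB1
  set cB2 : ℝ := 2*⟪g0, Mc v2⟫ with hcB2
  set cC1 : ℝ := ‖Mc v1‖^2 with hcC1
  set cC2 : ℝ := ‖Mc v2‖^2 with hcC2
  set cZ : ℝ := 2*⟪Mc v1, Mc v2⟫ with hcZ
  have hpt : (fun p : E2 => ‖Mc (φ p) + vv‖^2) =
      (fun p : E2 => (fun q : ℝ × ℝ => cA + cB1*q.1 + cB2*q.2 + cC1*q.1^2 + cC2*q.2^2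
        + cZ*q.1*q.2) (ψ2 p)) := by
    funext p
    have h1 : Mc (φ p) + vv = g0 + (p 0 • Mc v1 + p 1 • Mc v2) := by
      rw [hφdef]
      simp only [map_add, hLcdef, mkL_apply, _root_.map_smul]
      rw [hg0def]
      abel
    rw [h1, ψ2_apply]
    simp only [hcA, hcB1, hcB2, hcC1, hcC2, hcZ, norm2, inner2, PiLp.add_apply,
      PiLp.smul_apply, smul_eq_mul]
    ring
  have hLHS : ∫ x in K, ‖gradient (fun y => u y - uI y) x‖ ^ 2 =
      |D| * (cA/2 + cB1/6 + cB2/6 + cC1/12 + cC2/12 + cZ/24) := by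
    simp only [hgrad]
    rw [hchg (fun x => ‖Mc x + vv‖ ^ 2)]
    rw [hpt, transfer2 (fun q : ℝ × ℝ => cA + cB1*q.1 + cB2*q.2 + cC1*q.1^2 + cC2*q.2^2
        + cZ*q.1*q.2), integral_S2]
    rw [smul_eq_mul]
  rw [hLHS]
  -- expand the right-hand side
  have hB01 := hBoff 0 1 (by decide)
  have hB02 := hBoff 0 2 (by decide)
  have hB10 := hBoff 1 0 (by decide)
  have hB12 := hBoff 1 2 (by decide)
  have hB20 := hBoff 2 0 (by decide)
  have hB21 := hBoff 2 1 (by decide)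
  have hdot : d ⬝ᵥ B.mulVec d =
      d 0 * (B 0 0 * d 0 + B 0 1 * d 1 + B 0 2 * d 2)
      + d 1 * (B 1 0 * d 0 + B 1 1 * d 1 + B 1 2 * d 2)
      + d 2 * (B 2 0 * d 0 + B 2 1 * d 1 + B 2 2 * d 2) := by
    simp [dotProduct, Matrix.mulVec, Fin.sum_univ_three]
  rw [hdot, hBdiag 0, hBdiag 1, hBdiag 2, hB01, hB02, hB10, hB12, hB20, hB21, hvolK]
  -- edge vectors in terms of v1, v2
  have hl0 : ℓ 0 = v2 - v1 := by
    have h : ℓ 0 = a 2 - a 1 := hℓ 0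
    rw [h, hv1def, hv2def]
    abel
  have hl1 : ℓ 1 = -v2 := by
    have h : ℓ 1 = a 0 - a 2 := hℓ 1
    rw [h, hv2def]
    abel
  have hl2 : ℓ 2 = v1 := by
    have h : ℓ 2 = a 1 - a 0 := hℓ 2
    rw [h, hv1def]
  -- interpolation constraints
  have hIc : ∀ i, ⟪w0, a i⟫ + uI 0 = 1/2 * ⟪a i, Mc (a i)⟫ + ⟪b, a i⟫ + c := by
    intro i
    have h := hI i
    rw [hu (a i), huI (a i), hMcB] at h
    exact h
  have ha1 : a 1 = a 0 + v1 := by rw [hv1def]; abel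
  have ha2 : a 2 = a 0 + v2 := by rw [hv2def]; abel
  have hg00 : g0 0 = (a 0 0 * H 0 0 + a 0 1 * H 0 1) + (b 0 - w0 0) := by
    rw [hg0def, hvvdef]
    simp only [PiLp.add_apply, PiLp.sub_apply]
    rw [hMc0]
  have hg01 : g0 1 = (a 0 0 * H 1 0 + a 0 1 * H 1 1) + (b 1 - w0 1) := by
    rw [hg0def, hvvdef]
    simp only [PiLp.add_apply, PiLp.sub_apply]
    rw [hMc1]
  have c1 : g0 0 * v1 0 + g0 1 * v1 1 =
      -(1/2) * (v1 0 * H 0 0 * v1 0 + v1 0 * H 0 1 * v1 1 + v1 1 * H 1 0 * v1 0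
        + v1 1 * H 1 1 * v1 1) := by
    have e0 := hIc 0
    have e1 := hIc 1
    rw [ha1] at e1
    simp only [inner2, hMc0, hMc1, PiLp.add_apply] at e0 e1
    rw [hg00, hg01]
    linear_combination e0 - e1 + (1/2)*(a 0 0 * v1 1 - a 0 1 * v1 0) * hsymH
  have c2 : g0 0 * v2 0 + g0 1 * v2 1 =
      -(1/2) * (v2 0 * H 0 0 * v2 0 + v2 0 * H 0 1 * v2 1 + v2 1 * H 1 0 * v2 0
        + v2 1 * H 1 1 * v2 1) := by
    have e0 := hIc 0
    have e2 := hIc 2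
    rw [ha2] at e2
    simp only [inner2, hMc0, hMc1, PiLp.add_apply] at e0 e2
    rw [hg00, hg01]
    linear_combination e0 - e2 + (1/2)*(a 0 0 * v2 1 - a 0 1 * v2 0) * hsymH
  have hg0a : g0 0 = ((-(1/2) * (v1 0 * H 0 0 * v1 0 + v1 0 * H 0 1 * v1 1 + v1 1 * H 1 0 * v1 0
        + v1 1 * H 1 1 * v1 1)) * v2 1 - (-(1/2) * (v2 0 * H 0 0 * v2 0 + v2 0 * H 0 1 * v2 1
        + v2 1 * H 1 0 * v2 0 + v2 1 * H 1 1 * v2 1)) * v1 1) / D := by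
    rw [eq_div_iff hD, hDdef]
    linear_combination v2 1 * c1 - v1 1 * c2
  have hg0b : g0 1 = ((-(1/2) * (v2 0 * H 0 0 * v2 0 + v2 0 * H 0 1 * v2 1 + v2 1 * H 1 0 * v2 0
        + v2 1 * H 1 1 * v2 1)) * v1 0 - (-(1/2) * (v1 0 * H 0 0 * v1 0 + v1 0 * H 0 1 * v1 1
        + v1 1 * H 1 0 * v1 0 + v1 1 * H 1 1 * v1 1)) * v2 0) / D := by
    rw [eq_div_iff hD, hDdef]
    linear_combination v1 0 * c2 - v2 0 * c1
  -- reduce everything to coordinates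
  simp only [hcA, hcB1, hcB2, hcC1, hcC2, hcZ, hd, hmB, hl0, hl1, hl2, norm2, inner2,
    PiLp.sub_apply, PiLp.neg_apply, hMc0, hMc1]
  rw [hg0a, hg0b]
  simp only [hsymH]
  rcases abs_cases D with ⟨hDeq, _⟩ | ⟨hDeq, _⟩ <;> rw [hDeq] <;> field_simp <;> ring
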